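/- Let σ ∈ ℕ with σ ≥ 1, let (Γ_ℓ)_{ℓ≥0} be positive real numbers, let (γ_{j,m}) for j ≥ 1 and 1 ≤ m ≤ σ be real numbers, and let (x_j)_{j≥1} be real numbers. For s ≥ 0 and ℓ ≥ 0 define p_{s,ℓ} := ∑_{ν ∈ {0,1,…,σ}^s, |ν| = ℓ} Γ_ℓ ∏_{j ∈ {1,…,s}: ν_j ≠ 0} (γ_{j,ν_j} x_j), so that p_{s,0} = Γ_0 and p_{s,ℓ} = 0 whenever ℓ > σs. Then for all s ≥ 1 and all 1 ≤ ℓ ≤ σs: p_{s,ℓ} = p_{s−1,ℓ} + x_s ∑_{w=1}^{min{ℓ,σ}} (Γ_ℓ / Γ_{ℓ−w}) γ_{s,w} p_{s−1,ℓ−w}. -/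

import Mathlib

/-- `p_{s,ℓ} = ∑_{ν ∈ {0,…,σ}^s, |ν| = ℓ} Γ_ℓ ∏_{j ∈ {1,…,s} : ν_j ≠ 0} (γ_{j,ν_j} x_j)`,
where the `j`-th coordinate (1-based) corresponds to the index `j` of `γ` and `x`. -/
noncomputable def pCBC (σ : ℕ) (Γ : ℕ → ℝ) (γ : ℕ → ℕ → ℝ) (x : ℕ → ℝ) (s ℓ : ℕ) : ℝ :=
  ∑ ν ∈ (Fintype.piFinset fun _ : Fin s => Finset.range (σ + 1)).filter
      (fun ν => ∑ j, ν j = ℓ),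
    Γ ℓ * ∏ j ∈ Finset.univ.filter (fun j : Fin s => ν j ≠ 0),
      γ (j.1 + 1) (ν j) * x (j.1 + 1)

/-- single-factor weight -/
noncomputable def gCBC (γ : ℕ → ℕ → ℝ) (x : ℕ → ℝ) (j w : ℕ) : ℝ :=
  if w = 0 then 1 else γ j w * x j

/-- `p_{s,ℓ}` without the `Γ_ℓ` factor -/
noncomputable def qCBC (σ : ℕ) (γ : ℕ → ℕ → ℝ) (x : ℕ → ℝ) (s ℓ : ℕ) : ℝ :=
  ∑ ν ∈ Fintype.piFinset fun _ : Fin s => Finset.range (σ + 1),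
    if (∑ j, ν j) = ℓ then ∏ j : Fin s, gCBC γ x (j.1 + 1) (ν j) else 0

lemma pCBC_eq (σ : ℕ) (Γ : ℕ → ℝ) (γ : ℕ → ℕ → ℝ) (x : ℕ → ℝ) (s ℓ : ℕ) :
    pCBC σ Γ γ x s ℓ = Γ ℓ * qCBC σ γ x s ℓ := by
  rw [pCBC, qCBC, Finset.sum_filter, Finset.mul_sum]
  refine Finset.sum_congr rfl fun ν _ => ?_
  split_ifs with h
  · rw [Finset.prod_filter]
    congr 1
    refine Finset.prod_congr rfl fun j _ => ?_
    rw [gCBC]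
    by_cases hj : ν j = 0 <;> simp [hj]
  · simp

lemma qCBC_succ (σ : ℕ) (γ : ℕ → ℕ → ℝ) (x : ℕ → ℝ) (n ℓ : ℕ) :
    qCBC σ γ x (n + 1) ℓ
      = ∑ w ∈ Finset.range (σ + 1),
          if w ≤ ℓ then gCBC γ x (n + 1) w * qCBC σ γ x n (ℓ - w) else 0 := by
  have : ∀ w ∈ Finset.range (σ + 1),
      (if w ≤ ℓ then gCBC γ x (n + 1) w * qCBC σ γ x n (ℓ - w) else 0)
        = ∑ ν ∈ Fintype.piFinset fun _ : Fin n => Finset.range (σ + 1),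
            if (∑ j, ν j) + w = ℓ then
              (∏ j : Fin n, gCBC γ x (j.1 + 1) (ν j)) * gCBC γ x (n + 1) w else 0 := by
    intro w _
    rw [qCBC, Finset.mul_sum]
    split_ifs with hw
    · refine Finset.sum_congr rfl fun ν _ => ?_
      by_cases h : (∑ j, ν j) = ℓ - w
      · have : (∑ j, ν j) + w = ℓ := by omega
        simp [h, this, mul_comm, Nat.sub_add_cancel hw]
      · have : ¬ ((∑ j, ν j) + w = ℓ) := by omega
        simp [h, this]
    · refine (Finset.sum_eq_zero fun ν _ => ?_).symm
      have : ¬ ((∑ j, ν j) + w = ℓ) := by omega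
      simp [this]
  rw [Finset.sum_congr rfl this, ← Finset.sum_product', qCBC]
  refine Finset.sum_nbij' (fun ν => (ν (Fin.last n), Fin.init ν))
    (fun p => Fin.snoc p.2 p.1) ?_ ?_ ?_ ?_ ?_
  · intro ν hν
    simp only [Fintype.mem_piFinset] at hν
    simp only [Finset.mem_product, Fintype.mem_piFinset]
    exact ⟨hν _, fun j => hν _⟩
  · intro p hp
    simp only [Finset.mem_product, Fintype.mem_piFinset] at hp
    simp only [Fintype.mem_piFinset]
    intro j
    induction j using Fin.lastCases with
    | last => simpa using hp.1
    | cast i => simpa using hp.2 i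
  · intro ν _
    exact Fin.snoc_init_self ν
  · intro p _
    simp [Fin.init_snoc]
  · intro ν _
    rw [Fin.sum_univ_castSucc (f := fun j => ν j), Fin.prod_univ_castSucc]
    simp [Fin.init, Fin.val_last]
    rfl

theorem stmt_15 (σ : ℕ) (hσ : 1 ≤ σ) (Γ : ℕ → ℝ) (hΓ : ∀ ℓ, 0 < Γ ℓ)
    (γ : ℕ → ℕ → ℝ) (x : ℕ → ℝ) :
    ∀ s : ℕ, 1 ≤ s → ∀ ℓ : ℕ, 1 ≤ ℓ → ℓ ≤ σ * s →
      pCBC σ Γ γ x s ℓ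
        = pCBC σ Γ γ x (s - 1) ℓ +
            x s * ∑ w ∈ Finset.Icc 1 (min ℓ σ),
              (Γ ℓ / Γ (ℓ - w)) * γ s w * pCBC σ Γ γ x (s - 1) (ℓ - w) := by
  intro s hs ℓ hℓ _
  obtain ⟨n, rfl⟩ : ∃ n, s = n + 1 := ⟨s - 1, by omega⟩
  simp only [Nat.add_sub_cancel, pCBC_eq]
  rw [qCBC_succ, Finset.mul_sum, Finset.sum_range_succ']
  have h0 : Γ ℓ * (if 0 ≤ ℓ then gCBC γ x (n + 1) 0 * qCBC σ γ x n (ℓ - 0) else 0)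
      = Γ ℓ * qCBC σ γ x n ℓ := by simp [gCBC]
  rw [h0, add_comm]
  congr 1
  have h2 : Finset.Icc 1 (min ℓ σ) = (Finset.Icc 1 σ).filter (· ≤ ℓ) := by
    ext w; simp; omega
  rw [Finset.mul_sum, h2, Finset.sum_filter, ← Finset.Ico_add_one_right_eq_Icc,
    Finset.sum_Ico_eq_sum_range]
  refine Finset.sum_congr rfl fun k hk => ?_
  have hco : 1 + k = k + 1 := by omega
  rw [hco]
  have hne : Γ (ℓ - (k + 1)) ≠ 0 := (hΓ _).ne'
  split_ifs with h
  · rw [gCBC, if_neg (by omega)]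
    field_simp
  · simp
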